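/- For every invertible n×n matrix A (over ℝ or ℂ) there exist a semisimple matrix S and a unipotent matrix U such that A = S U and S U = U S; moreover, S and U with these properties are unique. -/

import Mathlib

open Matrix

/-- A complex square matrix is semisimple iff it is diagonalizable over `ℂ`. -/
def IsSemisimpleMatC {n : ℕ} (S : Matrix (Fin n) (Fin n) ℂ) : Prop :=
  ∃ P D : Matrix (Fin n) (Fin n) ℂ, IsUnit P ∧ D.IsDiag ∧ S = P * D * P⁻¹

/-- A real square matrix is semisimple iff it is diagonalizable over `ℂ`. -/
def IsSemisimpleMatR {n : ℕ} (S : Matrix (Fin n) (Fin n) ℝ) : Prop :=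
  IsSemisimpleMatC (S.map (algebraMap ℝ ℂ))

open Polynomial Module

lemma aeval_units_conj {R A : Type*} [CommSemiring R] [Ring A] [Algebra R A]
    (u : Aˣ) (x : A) (p : R[X]) :
    aeval ((u : A) * x * ↑u⁻¹) p = (u : A) * aeval x p * ↑u⁻¹ := by
  induction p using Polynomial.induction_on' with
  | add p q hp hq => rw [map_add, map_add, hp, hq, mul_add, add_mul]
  | monomial k a =>
      rw [aeval_monomial, aeval_monomial, Units.conj_pow]
      simp only [← mul_assoc]
      rw [Algebra.commutes a]

lemma isSemisimple_of_isSemisimpleMatC {n : ℕ} {S : Matrix (Fin n) (Fin n) ℂ}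
    (hS : IsSemisimpleMatC S) : Module.End.IsSemisimple (Matrix.toLinAlgEquiv' S) := by
  obtain ⟨P, D, hP, hD, rfl⟩ := hS
  set d : Fin n → ℂ := fun i => D i i with hd
  have hDd : D = Matrix.diagonal d := hD.diagonal_diag.symm
  set s : Finset ℂ := Finset.image d Finset.univ with hs
  set p : ℂ[X] := ∏ μ ∈ s, (X - C μ) with hp
  have hsf : Squarefree p :=
    (Polynomial.separable_prod_X_sub_C_iff'.mpr (fun x _ y _ h => h)).squarefree
  have hd0 : aeval d p = 0 := by
    funext i
    have h1 : aeval d p i = aeval (d i) p :=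
      (Polynomial.aeval_algHom_apply (Pi.evalAlgHom ℂ (fun _ => ℂ) i) d p).symm
    rw [h1]
    have : (Polynomial.aeval (d i)) p = Polynomial.eval (d i) p := by
      rw [Polynomial.aeval_def, Polynomial.eval]
      rfl
    rw [this, hp, Polynomial.eval_prod]
    refine Finset.prod_eq_zero (Finset.mem_image_of_mem d (Finset.mem_univ i)) ?_
    simp
  have hD0 : aeval D p = 0 := by
    rw [hDd, show Matrix.diagonal d = Matrix.diagonalAlgHom (α := ℂ) ℂ d from rfl,
      Polynomial.aeval_algHom_apply, hd0, map_zero]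
  have hS0 : aeval (P * D * P⁻¹) p = 0 := by
    have hu : (hP.unit : Matrix (Fin n) (Fin n) ℂ) = P := hP.unit_spec
    have hui : ((hP.unit⁻¹ : _ˣ) : Matrix (Fin n) (Fin n) ℂ) = P⁻¹ := by
      rw [Matrix.coe_units_inv, hP.unit_spec]
    have h := aeval_units_conj hP.unit D p
    rw [hui, hP.unit_spec, hD0, mul_zero, zero_mul] at h
    exact h
  apply Module.End.isSemisimple_of_squarefree_aeval_eq_zero hsf
  have h2 : aeval (Matrix.toLinAlgEquiv'.toAlgHom (P * D * P⁻¹)) p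
      = Matrix.toLinAlgEquiv'.toAlgHom (aeval (P * D * P⁻¹) p) :=
    Polynomial.aeval_algHom_apply _ _ _
  rw [show Matrix.toLinAlgEquiv' (P * D * P⁻¹)
      = Matrix.toLinAlgEquiv'.toAlgHom (P * D * P⁻¹) from rfl, h2, hS0, map_zero]

lemma isSemisimpleMatC_of_isSemisimple {n : ℕ} {S : Matrix (Fin n) (Fin n) ℂ}
    (hf : Module.End.IsSemisimple (Matrix.toLinAlgEquiv' S)) : IsSemisimpleMatC S := by
  classical
  set f : Module.End ℂ (Fin n → ℂ) := Matrix.toLinAlgEquiv' S with hfdef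
  have hsup : ⨆ μ : ℂ, f.eigenspace μ = ⊤ := by
    have h := Module.End.iSup_maxGenEigenspace_eq_top f
    have h2 : ∀ μ : ℂ, f.maxGenEigenspace μ = f.eigenspace μ :=
      fun μ => hf.isFinitelySemisimple.maxGenEigenspace_eq_eigenspace μ
    simp_rw [h2] at h; exact h
  set s : Finset ℂ := (minpoly ℂ f).roots.toFinset with hs
  have hbot : ∀ μ : ℂ, μ ∉ s → f.eigenspace μ = ⊥ := by
    intro μ hμ
    by_contra hne
    have h3 : f.HasEigenvalue μ := hne
    rw [Module.End.hasEigenvalue_iff_isRoot] at h3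
    exact hμ (Multiset.mem_toFinset.mpr
      ((Polynomial.mem_roots (minpoly.ne_zero_of_finite ℂ f)).mpr h3))
  have hsup' : ⨆ μ : s, f.eigenspace (μ : ℂ) = ⊤ := by
    rw [← hsup]
    refine le_antisymm (iSup_le fun μ => le_iSup _ (μ : ℂ)) (iSup_le fun μ => ?_)
    by_cases h : μ ∈ s
    · exact le_iSup_of_le ⟨μ, h⟩ le_rfl
    · rw [hbot μ h]; exact bot_le
  have hind : iSupIndep fun μ : s => f.eigenspace (μ : ℂ) :=
    f.eigenspaces_iSupIndep.comp Subtype.val_injective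
  have hInt : DirectSum.IsInternal fun μ : s => f.eigenspace (μ : ℂ) :=
    DirectSum.isInternal_submodule_of_iSupIndep_of_iSup_eq_top hind hsup'
  let v : ∀ μ : s, Basis (Fin (finrank ℂ (f.eigenspace (μ : ℂ)))) ℂ (f.eigenspace (μ : ℂ)) :=
    fun μ => Module.finBasis ℂ _
  let b := hInt.collectedBasis v
  have hb : ∀ a, f (b a) = (a.1 : ℂ) • b a := by
    intro a
    have hba : b a = ((v a.1 a.2 : f.eigenspace (a.1 : ℂ)) : Fin n → ℂ) := by
      rw [hInt.collectedBasis_coe v]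
    have hmem : b a ∈ f.eigenspace (a.1 : ℂ) := by rw [hba]; exact (v a.1 a.2).2
    exact Module.End.mem_eigenspace_iff.mp hmem
  have hcard : Fintype.card ((μ : s) × Fin (finrank ℂ (f.eigenspace (μ : ℂ)))) = n := by
    rw [← Module.finrank_eq_card_basis b, Module.finrank_fin_fun]
  let e := Fintype.equivFinOfCardEq hcard
  let c := b.reindex e
  let μ' : Fin n → ℂ := fun i => ((e.symm i).1 : ℂ)
  have hc : ∀ i, f (c i) = μ' i • c i := fun i => by
    rw [Basis.reindex_apply]; exact hb _
  let e₀ := Pi.basisFun ℂ (Fin n)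
  let P := e₀.toMatrix ⇑c
  let D := LinearMap.toMatrix c c f
  have hPunit : IsUnit P := by
    have := e₀.invertibleToMatrix c
    exact isUnit_of_invertible P
  have hPinv : P⁻¹ = c.toMatrix ⇑e₀ := Matrix.inv_eq_right_inv (e₀.toMatrix_mul_toMatrix_flip c)
  refine ⟨P, D, hPunit, ?_, ?_⟩
  · intro i j hij
    show LinearMap.toMatrix c c f i j = 0
    rw [LinearMap.toMatrix_apply, hc j, _root_.map_smul, Basis.repr_self]
    simp [Finsupp.single_eq_of_ne' (Ne.symm hij)]
  · rw [hPinv]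
    have key := basis_toMatrix_mul_linearMap_toMatrix_mul_basis_toMatrix e₀ c e₀ c f
    have : S = LinearMap.toMatrix e₀ e₀ f := by
      rw [show LinearMap.toMatrix e₀ e₀ = LinearMap.toMatrix' from LinearMap.toMatrix_eq_toMatrix', hfdef]
      exact (LinearMap.toMatrix'_toLin' S).symm
    rw [this, ← key]

lemma jordanC {n : ℕ} (A : Matrix (Fin n) (Fin n) ℂ) (hA : IsUnit A) :
    ∃! p : Matrix (Fin n) (Fin n) ℂ × Matrix (Fin n) (Fin n) ℂ,
      IsSemisimpleMatC p.1 ∧ IsNilpotent (p.2 - 1) ∧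
        A = p.1 * p.2 ∧ p.1 * p.2 = p.2 * p.1 := by
  classical
  set ε := Matrix.toLinAlgEquiv' (n := Fin n) (R := ℂ) with hε
  set f : Module.End ℂ (Fin n → ℂ) := ε A with hfdef
  have hfU : IsUnit f := hA.map ε
  obtain ⟨Nf, hNmem, Sf, hSmem, hN, hSS, hsum⟩ :=
    Module.End.exists_isNilpotent_isSemisimple (f := f)
  have hcfS : Commute f Sf := Algebra.commute_of_mem_adjoin_self hSmem
  have hcfN : Commute f Nf := Algebra.commute_of_mem_adjoin_self hNmem
  have hcNS : Commute Nf Sf :=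
    Algebra.commute_of_mem_adjoin_singleton_of_commute hSmem hcfN.symm
  have hSf_eq : Sf = f + -Nf := by rw [hsum]; abel
  have hSfU : IsUnit Sf := by
    rw [hSf_eq]
    exact hN.neg.isUnit_add_left_of_commute hfU hcfN.symm.neg_left
  obtain ⟨us, hus⟩ := hSfU
  set Uf : Module.End ℂ (Fin n → ℂ) := ↑us⁻¹ * f with hUf
  have hNf_eq : Nf = f - Sf := by rw [hsum]; abel
  have hUf1 : Uf - 1 = ↑us⁻¹ * Nf := by
    rw [hUf, hNf_eq, mul_sub, ← hus, Units.inv_mul]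
  have hcNus : Commute Nf ↑us⁻¹ := by
    have : Commute Nf ↑us := by rw [hus]; exact hcNS
    exact this.units_inv_right
  have hUnil : IsNilpotent (Uf - 1) := by
    rw [hUf1]
    exact (hcNus.symm).isNilpotent_mul_left hN
  have hSfUf : Sf * Uf = f := by rw [hUf, ← hus, ← mul_assoc, Units.mul_inv, one_mul]
  have hUfSf : Uf * Sf = f := by
    rw [hUf, mul_assoc, hcfS.eq, ← mul_assoc, ← hus, Units.inv_mul, one_mul]
  set Smat := ε.symm Sf with hSmat
  set Umat := ε.symm Uf with hUmat
  have hεS : ε Smat = Sf := ε.apply_symm_apply Sf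
  have hεU : ε Umat = Uf := ε.apply_symm_apply Uf
  have hprod : A = Smat * Umat := by
    have h : Smat * Umat = ε.symm (Sf * Uf) := by rw [_root_.map_mul]
    rw [h, hSfUf, hfdef, AlgEquiv.symm_apply_apply]
  refine ⟨(Smat, Umat), ⟨?_, ?_, hprod, ?_⟩, ?_⟩
  · apply isSemisimpleMatC_of_isSemisimple
    rw [← hε, hεS]
    exact hSS
  · have h : Umat - 1 = ε.symm (Uf - 1) := by rw [_root_.map_sub, _root_.map_one, hUmat]
    rw [h]
    exact hUnil.map ε.symm
  · have h1 : Smat * Umat = ε.symm (Sf * Uf) := by rw [_root_.map_mul]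
    have h2 : Umat * Smat = ε.symm (Uf * Sf) := by rw [_root_.map_mul]
    rw [h1, h2, hSfUf, hUfSf]
  · rintro ⟨S', U'⟩ ⟨hS'ss, hU'nil, hAeq, hcomm'⟩
    simp only at hS'ss hU'nil hAeq hcomm'
    have hS'U : IsUnit S' := by
      rw [Matrix.isUnit_iff_isUnit_det] at hA ⊢
      rw [hAeq, Matrix.det_mul] at hA
      exact isUnit_of_mul_isUnit_left hA
    set S'f := ε S' with hS'fdef
    set U'f := ε U' with hU'fdef
    have h3 : f = S'f * U'f := by rw [hfdef, hAeq, _root_.map_mul]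
    have h4 : Commute S'f U'f := by
      have h := congrArg ε hcomm'
      rw [_root_.map_mul, _root_.map_mul] at h
      exact h
    have hS'ssE : Module.End.IsSemisimple S'f := isSemisimple_of_isSemisimpleMatC hS'ss
    have hU'nilE : IsNilpotent (U'f - 1) := by
      have h : U'f - 1 = ε (U' - 1) := by rw [_root_.map_sub, _root_.map_one]
      rw [h]
      exact hU'nil.map ε
    have hcS'f : Commute S'f f := by rw [h3]; exact (Commute.refl S'f).mul_right h4
    have hcS'Sf : Commute S'f Sf :=
      Algebra.commute_of_mem_adjoin_singleton_of_commute hSmem hcS'f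
    have hcS'Nf : Commute S'f Nf :=
      Algebra.commute_of_mem_adjoin_singleton_of_commute hNmem hcS'f
    set N'f := S'f * (U'f - 1) with hN'fdef
    have hN'nil : IsNilpotent N'f :=
      (h4.sub_right (Commute.one_right S'f)).isNilpotent_mul_left hU'nilE
    have hN'eq : N'f = f - S'f := by rw [hN'fdef, mul_sub, mul_one, ← h3]
    have hdiff_ss : Module.End.IsSemisimple (Sf - S'f) :=
      Module.End.IsSemisimple.sub_of_commute hcS'Sf.symm hSS hS'ssE
    have hdiff_nil : IsNilpotent (Sf - S'f) := by
      have heq : Sf - S'f = N'f - Nf := by rw [hN'eq, hNf_eq]; abel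
      rw [heq]
      have hcN'N : Commute N'f Nf := by rw [hN'eq]; exact hcfN.sub_left hcS'Nf
      exact hcN'N.isNilpotent_sub hN'nil hN
    have hSfeq : Sf = S'f := by
      have h := Module.End.eq_zero_of_isNilpotent_isSemisimple hdiff_nil hdiff_ss
      rwa [sub_eq_zero] at h
    have hS'eq : S' = Smat := by
      rw [hSmat, hSfeq]
      exact (ε.symm_apply_apply S').symm
    have hSmatU : IsUnit Smat := by rwa [hS'eq] at hS'U
    have hU'eq : U' = Umat := by
      apply hSmatU.mul_left_cancel
      rw [← hprod, ← hS'eq, ← hAeq]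
    exact Prod.ext hS'eq hU'eq

/-- **Multiplicative Jordan decomposition.** Every invertible `n × n` matrix over `ℝ`
or `ℂ` is uniquely the product `A = S U` of a semisimple matrix `S` and a unipotent
matrix `U` with `S U = U S`. -/
theorem multiplicative_jordan_decomposition (n : ℕ) :
    (∀ A : Matrix (Fin n) (Fin n) ℝ, IsUnit A →
      ∃! p : Matrix (Fin n) (Fin n) ℝ × Matrix (Fin n) (Fin n) ℝ,
        IsSemisimpleMatR p.1 ∧ IsNilpotent (p.2 - 1) ∧
          A = p.1 * p.2 ∧ p.1 * p.2 = p.2 * p.1) ∧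
    (∀ A : Matrix (Fin n) (Fin n) ℂ, IsUnit A →
      ∃! p : Matrix (Fin n) (Fin n) ℂ × Matrix (Fin n) (Fin n) ℂ,
        IsSemisimpleMatC p.1 ∧ IsNilpotent (p.2 - 1) ∧
          A = p.1 * p.2 ∧ p.1 * p.2 = p.2 * p.1) := by
  refine ⟨?_, fun A hA => jordanC A hA⟩
  intro A hA
  set ι : ℝ →+* ℂ := algebraMap ℝ ℂ with hι
  set Φ : Matrix (Fin n) (Fin n) ℝ →+* Matrix (Fin n) (Fin n) ℂ := ι.mapMatrix with hΦ
  have hΦinj : Function.Injective Φ := Matrix.map_injective ι.injective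
  have hΦapp : ∀ X : Matrix (Fin n) (Fin n) ℝ, Φ X = X.map ι := fun X => rfl
  set Ac : Matrix (Fin n) (Fin n) ℂ := Φ A with hAc
  have hAcU : IsUnit Ac := by
    rw [Matrix.isUnit_iff_isUnit_det] at hA ⊢
    rw [hAc, hΦ, ← RingHom.map_det]
    exact hA.map ι
  obtain ⟨pc, ⟨hss, hnil, hprod, hcomm⟩, huniq⟩ := jordanC Ac hAcU
  set σ : Matrix (Fin n) (Fin n) ℂ →+* Matrix (Fin n) (Fin n) ℂ := (starRingEnd ℂ).mapMatrix
    with hσ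
  have hσapp : ∀ (X : Matrix (Fin n) (Fin n) ℂ) i j, σ X i j = starRingEnd ℂ (X i j) :=
    fun X i j => rfl
  have hσA : σ Ac = Ac := by
    ext i j
    simp [hσapp, hAc, hΦapp, Matrix.map_apply, hι, Complex.conj_ofReal]
  have hσss : IsSemisimpleMatC (σ pc.1) := by
    obtain ⟨P, Dm, hP, hD, hSeq⟩ := hss
    have hPdet : IsUnit P.det := (Matrix.isUnit_iff_isUnit_det P).mp hP
    refine ⟨σ P, σ Dm, ?_, ?_, ?_⟩
    · rw [Matrix.isUnit_iff_isUnit_det] at hP ⊢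
      rw [hσ, ← RingHom.map_det]
      exact hP.map (starRingEnd ℂ)
    · intro i j hij
      rw [hσapp, hD hij, _root_.map_zero]
    · have hinv : (σ P)⁻¹ = σ P⁻¹ := by
        apply Matrix.inv_eq_right_inv
        rw [← _root_.map_mul, Matrix.mul_nonsing_inv _ hPdet, _root_.map_one]
      rw [hSeq, _root_.map_mul, _root_.map_mul, hinv]
  have hσnil : IsNilpotent (σ pc.2 - 1) := by
    have h : σ pc.2 - 1 = σ (pc.2 - 1) := by rw [_root_.map_sub, _root_.map_one]
    rw [h]
    exact hnil.map σ
  have hσpair : (σ pc.1, σ pc.2) = pc := by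
    apply huniq
    refine ⟨hσss, hσnil, ?_, ?_⟩
    · show Ac = σ pc.1 * σ pc.2
      rw [← _root_.map_mul, ← hprod, hσA]
    · show σ pc.1 * σ pc.2 = σ pc.2 * σ pc.1
      rw [← _root_.map_mul, ← _root_.map_mul, hcomm]
  have h1 : σ pc.1 = pc.1 := congrArg Prod.fst hσpair
  have h2 : σ pc.2 = pc.2 := congrArg Prod.snd hσpair
  set S : Matrix (Fin n) (Fin n) ℝ := Matrix.of fun i j => (pc.1 i j).re with hS
  set U : Matrix (Fin n) (Fin n) ℝ := Matrix.of fun i j => (pc.2 i j).re with hU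
  have hSmap : Φ S = pc.1 := by
    ext i j
    rw [hΦapp, Matrix.map_apply]
    have := Complex.conj_eq_iff_re.mp (congrFun (congrFun h1 i) j)
    simpa [hι, hS] using this
  have hUmap : Φ U = pc.2 := by
    ext i j
    rw [hΦapp, Matrix.map_apply]
    have := Complex.conj_eq_iff_re.mp (congrFun (congrFun h2 i) j)
    simpa [hι, hU] using this
  refine ⟨(S, U), ⟨?_, ?_, ?_, ?_⟩, ?_⟩
  · show IsSemisimpleMatC (S.map (algebraMap ℝ ℂ))
    rw [← hΦapp, hSmap]
    exact hss
  · obtain ⟨k, hk⟩ := hnil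
    exact ⟨k, hΦinj (by rw [_root_.map_pow, _root_.map_sub, _root_.map_one, hUmap, hk, _root_.map_zero])⟩
  · apply hΦinj
    rw [_root_.map_mul, hSmap, hUmap, ← hAc, hprod]
  · apply hΦinj
    rw [_root_.map_mul, _root_.map_mul, hSmap, hUmap, hcomm]
  · rintro ⟨S', U'⟩ ⟨h1', h2', h3', h4'⟩
    simp only at h1' h2' h3' h4'
    have hq : (Φ S', Φ U') = pc := by
      apply huniq
      refine ⟨?_, ?_, ?_, ?_⟩
      · show IsSemisimpleMatC (Φ S')
        rw [hΦapp]
        exact h1'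
      · show IsNilpotent (Φ U' - 1)
        obtain ⟨k, hk⟩ := h2'
        exact ⟨k, by rw [← _root_.map_one Φ, ← _root_.map_sub, ← _root_.map_pow, hk, _root_.map_zero]⟩
      · show Ac = Φ S' * Φ U'
        rw [← _root_.map_mul, ← h3']
      · show Φ S' * Φ U' = Φ U' * Φ S'
        rw [← _root_.map_mul, ← _root_.map_mul, h4']
    have hqS : Φ S' = pc.1 := congrArg Prod.fst hq
    have hqU : Φ U' = pc.2 := congrArg Prod.snd hq
    exact Prod.ext (hΦinj (by rw [hqS, hSmap])) (hΦinj (by rw [hqU, hUmap]))
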